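/- For every natural number k ≥ 0, the derivative of the polynomial γ_k satisfies γ_k′(t) = Σ_{j=1}^{k} (1/j)·γ_{k−j}(t) as an identity in ℚ[t]. (Interpretation: under the identification of K_0(P_n) with integer-valued polynomials sending O_{P_m} to γ_m, the operator D = d/dt sends O_{P_k} to O_{P_{k−1}} + (1/2)O_{P_{k−2}} + ⋯ + (1/k)O_{P_0}.) -/
import Mathlib


open Polynomial

/-- `γ_m(t) = (t+1)(t+2)⋯(t+m)/m! ∈ ℚ[t]`, the binomial-coefficient polynomial
`C(t+m, m)` (so `γ_0 = 1`). -/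
noncomputable def gam (m : ℕ) : ℚ[X] :=
  Polynomial.C ((m.factorial : ℚ))⁻¹ *
    ∏ i ∈ Finset.range m, (Polynomial.X + Polynomial.C (i + 1 : ℚ))

open Finset

lemma gam_key (m : ℕ) :
    Polynomial.C ((m : ℚ) + 1) * gam (m + 1) = (X + Polynomial.C ((m : ℚ) + 1)) * gam m := by
  have h1 : ((m : ℚ) + 1) ≠ 0 := by positivity
  simp only [gam, Nat.factorial_succ, Finset.prod_range_succ, Nat.cast_mul, Nat.cast_add,
    Nat.cast_one, mul_inv, Polynomial.C_mul]
  rw [show Polynomial.C ((m:ℚ)+1) * (Polynomial.C ((m:ℚ)+1)⁻¹ * Polynomial.C ((m.factorial:ℚ))⁻¹ *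
      ((∏ i ∈ range m, (X + Polynomial.C ((i:ℚ) + 1))) * (X + Polynomial.C ((m:ℚ) + 1)))) =
      (Polynomial.C ((m:ℚ)+1) * Polynomial.C ((m:ℚ)+1)⁻¹) * (Polynomial.C ((m.factorial:ℚ))⁻¹ *
      ((∏ i ∈ range m, (X + Polynomial.C ((i:ℚ) + 1))) * (X + Polynomial.C ((m:ℚ) + 1)))) from by ring,
    ← Polynomial.C_mul, mul_inv_cancel₀ h1]
  simp
  ring

/-- For every natural number `k ≥ 0`, the derivative of `γ_k` satisfies
`γ_k′(t) = Σ_{j=1}^{k} (1/j)·γ_{k-j}(t)` in `ℚ[t]`.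
(Under the identification of `K₀(ℙ_n)` with integer-valued polynomials sending
`O_{ℙ_m}` to `γ_m`, the operator `D = d/dt` sends `O_{ℙ_k}` to
`O_{ℙ_{k-1}} + (1/2)O_{ℙ_{k-2}} + ⋯ + (1/k)O_{ℙ_0}`.) -/
theorem derivative_gam (k : ℕ) :
    Polynomial.derivative (gam k) =
      ∑ j ∈ Finset.Icc 1 k, Polynomial.C ((j : ℚ))⁻¹ * gam (k - j) := by
  induction k with
  | zero => simp [gam]
  | succ k ih =>
    have hC : (Polynomial.C ((k:ℚ)+1)) ≠ 0 := by
      simp only [ne_eq, Polynomial.C_eq_zero]; positivity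
    apply mul_left_cancel₀ hC
    have step : Polynomial.C ((k:ℚ)+1) * Polynomial.derivative (gam (k+1))
        = gam k + (X + Polynomial.C ((k:ℚ)+1)) * Polynomial.derivative (gam k) := by
      rw [← Polynomial.derivative_C_mul, gam_key, derivative_mul]
      simp
    rw [step, ih]
    -- termwise on LHS
    have hterm : ∀ j ∈ Finset.Icc 1 k,
        (X + Polynomial.C ((k:ℚ)+1)) * (Polynomial.C ((j:ℚ))⁻¹ * gam (k-j))
          = Polynomial.C ((j:ℚ))⁻¹ * Polynomial.C (((k-j:ℕ):ℚ)+1) * gam (k-j+1) + gam (k-j) := by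
      intro j hj
      obtain ⟨hj1, hj2⟩ := Finset.mem_Icc.1 hj
      have hjne : ((j:ℚ)) ≠ 0 := by
        have : 0 < j := hj1
        positivity
      have hcast : ((k-j:ℕ):ℚ) = (k:ℚ) - j := by
        rw [Nat.cast_sub hj2]
      have hsplit : (X + Polynomial.C ((k:ℚ)+1))
          = (X + Polynomial.C (((k-j:ℕ):ℚ)+1)) + Polynomial.C ((j:ℚ)) := by
        rw [show ((k:ℚ)+1) = ((((k-j:ℕ):ℚ))+1) + j from by rw [hcast]; ring,
          Polynomial.C_add, ← add_assoc]
      calc (X + Polynomial.C ((k:ℚ)+1)) * (Polynomial.C ((j:ℚ))⁻¹ * gam (k-j))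
          = Polynomial.C ((j:ℚ))⁻¹ * ((X + Polynomial.C (((k-j:ℕ):ℚ)+1)) * gam (k-j))
            + (Polynomial.C ((j:ℚ))⁻¹ * Polynomial.C ((j:ℚ))) * gam (k-j) := by
            rw [hsplit]; ring
        _ = Polynomial.C ((j:ℚ))⁻¹ * Polynomial.C (((k-j:ℕ):ℚ)+1) * gam (k-j+1) + gam (k-j) := by
            rw [← gam_key (k-j), ← Polynomial.C_mul, inv_mul_cancel₀ hjne, Polynomial.C_1,
              one_mul, mul_assoc]
    -- termwise on RHS
    have hterm2 : ∀ j ∈ Finset.Icc 1 k,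
        Polynomial.C ((k:ℚ)+1) * (Polynomial.C ((j:ℚ))⁻¹ * gam (k+1-j))
          = Polynomial.C ((j:ℚ))⁻¹ * Polynomial.C (((k-j:ℕ):ℚ)+1) * gam (k-j+1) + gam (k-j+1) := by
      intro j hj
      obtain ⟨hj1, hj2⟩ := Finset.mem_Icc.1 hj
      have hjne : ((j:ℚ)) ≠ 0 := by
        have : 0 < j := hj1
        positivity
      have hcast : ((k-j:ℕ):ℚ) = (k:ℚ) - j := by
        rw [Nat.cast_sub hj2]
      have hidx : k + 1 - j = k - j + 1 := by omega
      rw [hidx, show ((k:ℚ)+1) = ((((k-j:ℕ):ℚ))+1) + j from by rw [hcast]; ring,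
        Polynomial.C_add, add_mul, mul_comm (Polynomial.C ((j:ℚ))) _,
        show Polynomial.C ((j:ℚ))⁻¹ * gam (k-j+1) * Polynomial.C ((j:ℚ))
          = (Polynomial.C ((j:ℚ))⁻¹ * Polynomial.C ((j:ℚ))) * gam (k-j+1) from by ring,
        ← Polynomial.C_mul, inv_mul_cancel₀ hjne, Polynomial.C_1, one_mul]
      ring
    rw [Finset.sum_Icc_succ_top (by omega : 1 ≤ k+1), mul_add, Finset.mul_sum,
      Finset.mul_sum, Finset.sum_congr rfl hterm, Finset.sum_congr rfl hterm2,
      Finset.sum_add_distrib, Finset.sum_add_distrib]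
    have hlast : Polynomial.C ((k:ℚ)+1) * (Polynomial.C (((k+1:ℕ):ℚ))⁻¹ * gam (k+1-(k+1))) = gam 0 := by
      push_cast
      rw [← mul_assoc, ← Polynomial.C_mul, mul_inv_cancel₀ (by positivity : ((k:ℚ)+1) ≠ 0),
        Polynomial.C_1, one_mul]
      simp
    rw [hlast]
    -- reduce to sum identity
    have hsum : gam k + ∑ j ∈ Finset.Icc 1 k, gam (k-j)
        = (∑ j ∈ Finset.Icc 1 k, gam (k-j+1)) + gam 0 := by
      have e1 : ∑ j ∈ Finset.Icc 1 k, gam (k-j) = ∑ i ∈ Finset.range k, gam (k-(1+i)) := by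
        rw [← Finset.Ico_add_one_right_eq_Icc, Finset.sum_Ico_eq_sum_range]
        norm_num
      have e2 : ∑ j ∈ Finset.Icc 1 k, gam (k-j+1) = ∑ i ∈ Finset.range k, gam (k-i) := by
        rw [← Finset.Ico_add_one_right_eq_Icc, Finset.sum_Ico_eq_sum_range]
        norm_num
        apply Finset.sum_congr rfl
        intro i hi
        have : i < k := Finset.mem_range.1 hi
        congr 1
        omega
      rw [e1, e2]
      have e3 : gam k + ∑ i ∈ Finset.range k, gam (k-(1+i)) = ∑ i ∈ Finset.range (k+1), gam (k-i) := by
        rw [Finset.sum_range_succ']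
        simp [add_comm]
      have e4 : (∑ i ∈ Finset.range k, gam (k-i)) + gam 0 = ∑ i ∈ Finset.range (k+1), gam (k-i) := by
        rw [Finset.sum_range_succ]
        simp
      rw [e3, e4]
    -- finish with abelian group manipulation
    have := hsum
    abel_nf
    abel_nf at this
    linear_combination (norm := abel_nf) this
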